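/- Let t be an injective solution for e. Then the vectors (ν · e_i · t_i^{ν−1})_{i in I} of k^I, indexed by the integers ν with 1 ≤ ν ≤ m−1 and p ∤ ν, are linearly independent over k. Equivalently, since there are exactly m − 1 − ⌊m/p⌋ such indices ν, the k-vector space of families x = (x_i)_{i in I} in k^I satisfying sum_{i in I} ν e_i t_i^{ν−1} x_i = 0 for all such ν has dimension ⌊m/p⌋ + 2. (This is the computation of the tangent space showing that the open locus X*_e of points of X_e with pairwise distinct coordinates is regular.) -/

import Mathlib

/-- If `t` is an injective solution for `e`, the vectors
`(ν · e_i · t_i^(ν−1))_{i ∈ I}`, indexed by the `ν` with `1 ≤ ν ≤ m−1` and `p ∤ ν`, are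
linearly independent over `k`; equivalently, the space of `x ∈ k^I` with
`∑ i, ν e_i t_i^(ν−1) x_i = 0` for all such `ν` has dimension `⌊m/p⌋ + 2`. -/
theorem stmt_4 {p : ℕ} (hp : p.Prime) (k : Type*) [Field k] [CharP k p]
    (m : ℕ) (hm : 0 < m) (hpm : ¬ p ∣ m)
    (I : Type*) [Fintype I] (hI : Fintype.card I = m + 1)
    (e : I → ZMod p) (he : ∀ i, e i ≠ 0) (hesum : ∑ i, e i = 0)
    (t : I → k) (htinj : Function.Injective t)
    (hsol : ∀ ν : ℕ, 1 ≤ ν → ν ≤ m - 1 → ¬ p ∣ ν →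
      ∑ i, (ZMod.castHom (dvd_refl p) k (e i)) * t i ^ ν = 0) :
    LinearIndependent k
      (fun (ν : {ν : ℕ // 1 ≤ ν ∧ ν ≤ m - 1 ∧ ¬ p ∣ ν}) =>
        (fun i => (ν.1 : k) * (ZMod.castHom (dvd_refl p) k (e i)) * t i ^ (ν.1 - 1) : I → k)) ∧
    Module.finrank k
      ↥(⨅ ν : {ν : ℕ // 1 ≤ ν ∧ ν ≤ m - 1 ∧ ¬ p ∣ ν},
        LinearMap.ker (∑ i : I,
          ((ν.1 : k) * (ZMod.castHom (dvd_refl p) k (e i)) * t i ^ (ν.1 - 1)) •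
            (LinearMap.proj i : (I → k) →ₗ[k] k))) = m / p + 2 := by
  classical
  haveI : Fact p.Prime := ⟨hp⟩
  set e' : I → k := fun i => ZMod.castHom (dvd_refl p) k (e i) with he'def
  have he' : ∀ i, e' i ≠ 0 := by
    intro i h
    exact he i ((ZMod.castHom (dvd_refl p) k).injective (by rw [map_zero]; exact h))
  set S := {ν : ℕ // 1 ≤ ν ∧ ν ≤ m - 1 ∧ ¬ p ∣ ν} with hSdef
  haveI : Fintype S := Fintype.subtype ((Finset.Icc 1 (m-1)).filter (fun ν => ¬ p ∣ ν))
    (by intro ν; simp [Finset.mem_filter, Finset.mem_Icc, and_assoc])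
  set v : S → (I → k) := fun ν => fun i => (ν.1 : k) * e' i * t i ^ (ν.1 - 1) with hvdef
  have hνne : ∀ ν : S, (ν.1 : k) ≠ 0 := fun ν h => ν.2.2.2 ((CharP.cast_eq_zero_iff k p ν.1).mp h)
  -- linear independence
  have hli : LinearIndependent k v := by
    rw [Fintype.linearIndependent_iff]
    intro g hg μ
    set f : Polynomial k := ∑ ν : S, Polynomial.C (g ν * ν.1) * Polynomial.X ^ (ν.1 - 1) with hfdef
    have hdeg : f.natDegree < Fintype.card I := by
      have hb : f.natDegree ≤ m - 1 := by
        refine Polynomial.natDegree_sum_le_of_forall_le _ _ ?_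
        intro ν _
        exact le_trans (Polynomial.natDegree_C_mul_X_pow_le _ _) (by have := ν.2.2.1; omega)
      rw [hI]; omega
    have heval : ∀ i, f.eval (t i) = 0 := by
      intro i
      have h1 := congrFun hg i
      simp only [Finset.sum_apply, Pi.smul_apply, smul_eq_mul, Pi.zero_apply, hvdef] at h1
      have h2 : ∑ ν : S, g ν * ((ν.1 : k) * e' i * t i ^ (ν.1 - 1))
          = e' i * ∑ ν : S, g ν * (ν.1 : k) * t i ^ (ν.1 - 1) := by
        rw [Finset.mul_sum]; exact Finset.sum_congr rfl (fun ν _ => by ring)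
      have h3 : ∑ ν : S, g ν * (ν.1 : k) * t i ^ (ν.1 - 1) = 0 := by
        rcases mul_eq_zero.mp (h2 ▸ h1) with h | h
        · exact absurd h (he' i)
        · exact h
      simpa [hfdef, Polynomial.eval_finset_sum] using h3
    have hf0 : f = 0 := Polynomial.eq_zero_of_natDegree_lt_card_of_eval_eq_zero f htinj heval hdeg
    have hc := congrArg (fun q => Polynomial.coeff q (μ.1 - 1)) hf0
    simp only [Polynomial.finset_sum_coeff, Polynomial.coeff_C_mul_X_pow,
      Polynomial.coeff_zero, hfdef] at hc
    rw [Finset.sum_eq_single μ] at hc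
    · rw [if_pos rfl] at hc
      exact (mul_eq_zero.mp hc).resolve_right (hνne μ)
    · intro ν _ hνμ
      rw [if_neg]
      intro hh
      exact hνμ (Subtype.ext (by have := ν.2.1; have := μ.2.1; omega))
    · intro h; exact absurd (Finset.mem_univ μ) h
  refine ⟨hli, ?_⟩
  -- the map a ↦ ∑ i, a i • proj i
  set D : (I → k) →ₗ[k] Module.Dual k (I → k) :=
    { toFun := fun a => ∑ i : I, a i • (LinearMap.proj i : (I → k) →ₗ[k] k),
      map_add' := by intro a b; simp [add_smul, Finset.sum_add_distrib],
      map_smul' := by intro c a; simp [smul_smul, Finset.smul_sum] } with hDdef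
  have hDapp : ∀ (a x : I → k), D a x = ∑ i, a i * x i := by
    intro a x; simp [hDdef]
  have hDinj : LinearMap.ker D = ⊥ := by
    rw [LinearMap.ker_eq_bot']
    intro a ha
    funext j
    have := congrFun (congrArg (fun (f : Module.Dual k (I → k)) => (f : (I → k) → k)) ha) (Pi.single j 1)
    simpa [hDapp, Pi.single_apply, mul_ite] using (by
      have h := congrArg (fun (f : Module.Dual k (I → k)) => f (Pi.single j 1)) ha
      simpa [hDapp, Pi.single_apply] using h)
  have hφ : LinearIndependent k (D ∘ v) := hli.map' D hDinj
  set Φ : Subspace k (Module.Dual k (I → k)) := Submodule.span k (Set.range (D ∘ v)) with hΦdef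
  have hkey : (⨅ ν : S, LinearMap.ker (∑ i : I,
          ((ν.1 : k) * (ZMod.castHom (dvd_refl p) k (e i)) * t i ^ (ν.1 - 1)) •
            (LinearMap.proj i : (I → k) →ₗ[k] k))) = Φ.dualCoannihilator := by
    have hDv : ∀ ν : S, (∑ i : I,
          ((ν.1 : k) * (ZMod.castHom (dvd_refl p) k (e i)) * t i ^ (ν.1 - 1)) •
            (LinearMap.proj i : (I → k) →ₗ[k] k)) = D (v ν) := fun ν => rfl
    simp only [hDv]
    ext x
    simp only [Submodule.mem_iInf, LinearMap.mem_ker, Submodule.mem_dualCoannihilator]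
    constructor
    · intro h f hf
      have hle : Φ ≤ LinearMap.ker (Module.Dual.eval k (I → k) x) := by
        rw [hΦdef, Submodule.span_le]
        rintro _ ⟨ν, rfl⟩
        simpa using h ν
      simpa using hle hf
    · intro h ν
      exact h _ (Submodule.subset_span ⟨ν, rfl⟩)
  rw [hkey]
  have hsum := Subspace.finrank_add_finrank_dualCoannihilator_eq Φ
  have hΦrank : Module.finrank k Φ = Fintype.card S := finrank_span_eq_card hφ
  have hpi : Module.finrank k (I → k) = m + 1 := by
    rw [Module.finrank_pi, hI]
  have hcardS : Fintype.card S = (m - 1) - (m - 1) / p := by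
    rw [Fintype.card_of_subtype ((Finset.Icc 1 (m-1)).filter (fun ν => ¬ p ∣ ν))
      (by intro ν; simp [Finset.mem_filter, Finset.mem_Icc, and_assoc])]
    have h1 : Finset.Icc 1 (m-1) = Finset.Ioc 0 (m-1) := rfl
    have h2 := Finset.card_filter_add_card_filter_not
      (s := Finset.Ioc 0 (m-1)) (p := fun ν => p ∣ ν)
    rw [Nat.Ioc_filter_dvd_card_eq_div, Nat.card_Ioc] at h2
    rw [h1]
    omega
  have hdiv : (m - 1) / p = m / p := by
    obtain ⟨n, rfl⟩ := Nat.exists_eq_succ_of_ne_zero hm.ne'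
    rw [Nat.succ_sub_one, Nat.succ_div, if_neg hpm, add_zero]
  have hlt : m / p < m := Nat.div_lt_self hm hp.one_lt
  rw [hΦrank, hpi, hcardS, hdiv] at hsum
  omega
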